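/- arXiv:1909.13514 — 5 statements merged into one kernel-verified Lean document; each statement's English description precedes it below -/
import Mathlib

section
/- Let the language P contain a constant 0 and a unary function symbol S (among possibly other symbols), and let Num(x) denote the formula 0 ≐ S(0) → 0 ≐ x. Then for a closed term a, the formula Num(a) is valid in all structures if and only if a is of the form Sᵐ(0) for some m ≥ 0. -/
open FirstOrder Language

def L : FirstOrder.Language := ⟨fun _ => ℕ, fun _ => ℕ⟩

abbrev CTerm : Type := L.Term Empty

def kC {α : Type} (n : ℕ) : L.Term α := Term.func (n : L.Functions 0) ![]
def Sf {α : Type} (t : L.Term α) : L.Term α := Term.func ((0 : ℕ) : L.Functions 1) ![t]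
def Snum {α : Type} : ℕ → L.Term α → L.Term α
  | 0, t => t
  | m+1, t => Sf (Snum m t)
def pairT {α : Type} (t u : L.Term α) : L.Term α := Term.func ((0 : ℕ) : L.Functions 2) ![t, u]

def Valid {L' : FirstOrder.Language} (φ : L'.Sentence) : Prop :=
  ∀ (M : Type) [L'.Structure M] [Nonempty M], M ⊨ φ

def J (j k : ℕ) : ℕ := (j + k) * (j + k + 1) + k + 1

/-- Num(a) is the formula 0 ≐ S(0) → 0 ≐ a. -/
def NumF (a : CTerm) : L.Sentence :=
  (Term.equal (kC 0) (Sf (kC 0))).imp (Term.equal (kC 0) a)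

def fM : (n : ℕ) → (f : ℕ) → (Fin n → Bool) → Bool
  | 0, 0, _ => false
  | 1, 0, ts => ts 0
  | _, _, _ => true

instance boolStruct : L.Structure Bool := ⟨fun {n} f ts => fM n f ts, fun _ _ => False⟩

lemma realize_false_eq {v : Empty → Bool} :
    ∀ t : CTerm, Term.realize v t = false → ∃ m : ℕ, t = Snum m (kC 0) := by
  intro t
  induction t with
  | var x => exact x.elim
  | func f ts ih =>
    rename_i l
    intro h
    rw [Term.realize_func] at h
    change ℕ at f
    match l, f with
    | 0, 0 =>
      refine ⟨0, ?_⟩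
      have : ts = ![] := funext fun i => i.elim0
      rw [this]; rfl
    | 0, (g+1) => simp [Structure.funMap, fM] at h
    | 1, 0 =>
      have h0 : Term.realize v (ts 0) = false := h
      obtain ⟨m, hm⟩ := ih 0 h0
      refine ⟨m + 1, ?_⟩
      have : ts = ![ts 0] := by
        funext i; fin_cases i; rfl
      rw [this, hm]; rfl
    | 1, (g+1) => simp [Structure.funMap, fM] at h
    | (k+2), g => simp [Structure.funMap, fM] at h

theorem stmt_5 (a : CTerm) : Valid (NumF a) ↔ ∃ m : ℕ, a = Snum m (kC 0) := by
  constructor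
  · intro h
    have hb := h Bool
    rw [NumF] at hb
    simp only [Sentence.Realize, Formula.realize_imp, Formula.realize_equal] at hb
    have hprem : (Term.realize (M := Bool) (default : Empty → Bool) (kC 0)) =
        (Term.realize (M := Bool) (default : Empty → Bool) (Sf (kC 0))) := by decide
    have hres := hb hprem
    exact realize_false_eq a hres.symm
  · rintro ⟨m, rfl⟩
    intro M _ _
    rw [NumF]
    simp only [Sentence.Realize, Formula.realize_imp, Formula.realize_equal]
    intro h0
    have key : ∀ k, Term.realize (M := M) (default : Empty → M) (Snum k (kC 0)) =
        Term.realize (default : Empty → M) (kC 0) := by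
      intro k
      induction k with
      | zero => rfl
      | succ n ihn =>
        rw [show Snum (n+1) (kC 0) = Sf (Snum n (kC 0)) from rfl]
        show Structure.funMap (L := L) (M := M) ((0:ℕ) : L.Functions 1) (fun i => Term.realize (default : Empty → M) (![Snum n (kC 0)] i)) = _
        have harg : (fun i => Term.realize (default : Empty → M) (![Snum n (kC 0)] i)) =
            ![Term.realize (default : Empty → M) (kC 0)] := by
          funext i; fin_cases i; exact ihn
        rw [harg]
        have h2 : Structure.funMap (L := L) (M := M) ((0:ℕ) : L.Functions 1)
            ![Term.realize (default : Empty → M) (kC 0)] =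
            Term.realize (default : Empty → M) (Sf (kC 0)) := by
          show _ = Structure.funMap (L := L) (M := M) ((0:ℕ) : L.Functions 1) (fun i => Term.realize (default : Empty → M) (![kC 0] i))
          congr 1
          funext i; fin_cases i; rfl
        rw [h2]
        exact h0.symm
    exact (key m).symm
end

section
/- Let 0 and 0̃ be distinct constants, S a unary function symbol, and Plus(x,y,z) the formula 0̃ ≐ x → z ≐ y. Then Plus(Sᵐ(0), Sᵖ(0̃), Sᵠ(0)) is valid if and only if q = m + p. -/
open FirstOrder Language

/-- Plus(x,y,z) is the formula 0̃ ≐ x → z ≐ y, where 0 and 0̃ are the distinct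
constants with indices 0 and 1. -/
def PlusF (x y z : CTerm) : L.Sentence :=
  (Term.equal (kC 1) x).imp (Term.equal z y)

/-- A structure on ℕ where constant 0 is 0, constant 1 is m, S is succ. -/
def natStruc (m : ℕ) : L.Structure ℕ where
  funMap {n} := fun f x =>
    match n, f, x with
    | 0, f, _ => let f' : ℕ := f; if f' = 1 then m else 0
    | 1, _, x => x 0 + 1
    | _+2, _, _ => 0
  RelMap _ _ := True

lemma realize_Snum {M : Type} [L.Structure M] {α : Type} (v : α → M) (n : ℕ)
    (t : L.Term α) :
    (Snum n t).realize v =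
      (fun x => Structure.funMap (L := L) (M := M) ((0:ℕ) : L.Functions 1) ![x])^[n]
        (t.realize v) := by
  induction n with
  | zero => rfl
  | succ k ih =>
    rw [Function.iterate_succ_apply']
    simp only [Snum, Sf, Term.realize_func, ← ih]
    show Structure.funMap _ (fun i => Term.realize v (![Snum k t] i)) = _
    congr 1
    funext i
    fin_cases i
    rfl

theorem stmt_7 (m p q : ℕ) :
    Valid (PlusF (Snum m (kC 0)) (Snum p (kC 1)) (Snum q (kC 0))) ↔ q = m + p := by
  constructor
  · intro h
    letI := natStruc m
    have h0 : ∀ (n : ℕ) (t : L.Term Empty) (v : Empty → ℕ),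
        (Snum n t).realize v = t.realize v + n := by
      intro n t v
      rw [realize_Snum]
      induction n with
      | zero => rfl
      | succ k ih =>
        rw [Function.iterate_succ_apply', ih]
        show t.realize v + k + 1 = t.realize v + (k + 1)
        omega
    have hval := h ℕ
    simp only [PlusF, Sentence.Realize, Formula.Realize, BoundedFormula.realize_imp,
      Term.equal, Term.relabel, BoundedFormula.realize_bdEqual, Term.realize_relabel] at hval
    have hk0 : ∀ v : Empty ⊕ Fin 0 → ℕ, (kC 0 : L.Term _).realize v = 0 := fun _ => rfl
    have hk1' : ∀ x : Fin 0 → ℕ, Structure.funMap (L := L) (M := ℕ) ((1:ℕ) : L.Functions 0) x = m :=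
      fun _ => rfl
    have hk0' : ∀ x : Fin 0 → ℕ, Structure.funMap (L := L) (M := ℕ) ((0:ℕ) : L.Functions 0) x = 0 :=
      fun _ => rfl
    simp only [h0, kC, Term.realize, hk0', hk1'] at hval
    omega
  · intro hq M _ _
    subst hq
    simp only [PlusF, Sentence.Realize, Formula.Realize, BoundedFormula.realize_imp,
      Term.equal, BoundedFormula.realize_bdEqual, Term.realize_relabel, realize_Snum]
    intro hyp
    rw [hyp, Nat.add_comm m p, Function.iterate_add_apply]
end

section
/- Let 0, 0̂, 0̃, k, k̃ be distinct constants and SimT(x,y) the formula 0 ≐ 0̂ ∧ 0 ≐ 0̃ ∧ k ≐ k̃ → x ≐ y. Then for semitables a(x,y,z) and b(x,y,z), the formula SimT(a(0,0,k), b(0̂,0̃,k̃)) is valid if and only if a(x,y,z) = b(x,y,z) as semiterms. -/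
open FirstOrder Language

/-- Semitables over the variables x, y, z (encoded as Fin 3). -/
inductive IsSemitable : L.Term (Fin 3) → Prop
  | base : IsSemitable (Term.var 2)
  | step (p q : ℕ) (a : L.Term (Fin 3)) : IsSemitable a →
      IsSemitable (pairT (pairT (Snum p (Term.var 0)) (Snum q (Term.var 1))) a)

/-- SimT(x,y) is the formula 0 ≐ 0̂ ∧ 0 ≐ 0̃ ∧ k ≐ k̃ → x ≐ y, where
0, 0̂, 0̃, k, k̃ are the distinct constants of indices 0, 1, 2, 3, 4. -/
def SimTF (x y : CTerm) : L.Sentence :=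
  ((Term.equal (kC 0) (kC 1)) ⊓ (Term.equal (kC 0) (kC 2)) ⊓
    (Term.equal (kC 3) (kC 4))).imp (Term.equal x y)

inductive W : Type
  | c0 : W
  | ck : W
  | oth : ℕ → W
  | S : W → W
  | P : W → W → W

instance : Nonempty W := ⟨W.c0⟩

def wfun : (n : ℕ) → ℕ → (Fin n → W) → W
  | 0, 0, _ => W.c0
  | 0, 1, _ => W.c0
  | 0, 2, _ => W.c0
  | 0, 3, _ => W.ck
  | 0, 4, _ => W.ck
  | 0, _+5, _ => W.oth 0
  | 1, 0, v => W.S (v 0)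
  | 1, _+1, v => v 0
  | 2, 0, v => W.P (v 0) (v 1)
  | 2, _+1, v => v 0
  | _+3, _, _ => W.c0

instance WStruct : L.Structure W where
  funMap {n} f v := wfun n f v
  RelMap _ _ := True

def SnW : ℕ → W → W
  | 0, w => w
  | m+1, w => W.S (SnW m w)

lemma realize_Snum_s10 {α : Type} (m : ℕ) (t : L.Term α) (v : α → W) :
    (Snum m t).realize v = SnW m (t.realize v) := by
  induction m with
  | zero => rfl
  | succ m ih =>
      have e1 : (Snum (m+1) t).realize v = W.S ((Snum m t).realize v) := rfl
      rw [e1, ih]; rfl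

lemma SnW_inj {m n : ℕ} (h : SnW m W.c0 = SnW n W.c0) : m = n := by
  induction m generalizing n with
  | zero => cases n with
    | zero => rfl
    | succ n => exact absurd h (by simp [SnW])
  | succ m ih =>
      cases n with
      | zero => exact absurd h (by simp [SnW])
      | succ n => simp only [SnW, W.S.injEq] at h; exact congrArg Nat.succ (ih h)

def eW : Fin 3 → W := ![W.c0, W.c0, W.ck]

lemma realize_pairT (t u : L.Term (Fin 3)) :
    (pairT t u).realize eW = W.P (t.realize eW) (u.realize eW) := rfl

lemma key : ∀ a b : L.Term (Fin 3), IsSemitable a → IsSemitable b →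
    a.realize eW = b.realize eW → a = b := by
  intro a b ha hb h
  induction ha generalizing b with
  | base =>
      cases hb with
      | base => rfl
      | step p q c hc =>
          rw [realize_pairT] at h
          exact absurd h (by simp [Term.realize, eW])
  | step p q c hc ih =>
      cases hb with
      | base =>
          rw [realize_pairT] at h
          exact absurd h (by simp [Term.realize, eW])
      | step p' q' c' hc' =>
          rw [realize_pairT, realize_pairT, realize_pairT, realize_pairT,
            realize_Snum_s10, realize_Snum_s10, realize_Snum_s10, realize_Snum_s10] at h
          have hv0 : (Term.var 0 : L.Term (Fin 3)).realize eW = W.c0 := rfl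
          have hv1 : (Term.var 1 : L.Term (Fin 3)).realize eW = W.c0 := rfl
          rw [hv0, hv1] at h
          obtain ⟨⟨h1, h2⟩, h3⟩ := by
            simpa only [W.P.injEq] using h
          rw [SnW_inj h1, SnW_inj h2, ih c' hc' h3]

theorem stmt_10 (a b : L.Term (Fin 3)) (ha : IsSemitable a) (hb : IsSemitable b) :
    Valid (SimTF (a.subst ![kC 0, kC 0, kC 3]) (b.subst ![kC 1, kC 2, kC 4])) ↔
      a = b := by
  constructor
  · intro hV
    have hW := hV W
    simp only [SimTF, Sentence.Realize, Formula.realize_imp, Formula.realize_inf,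
      Formula.realize_equal, Term.realize_subst] at hW
    have h := hW ⟨⟨rfl, rfl⟩, rfl⟩
    apply key a b ha hb
    convert h using 2 <;> funext i <;> fin_cases i <;> rfl
  · rintro rfl
    intro M _ _
    simp only [SimTF, Sentence.Realize, Formula.realize_imp, Formula.realize_inf,
      Formula.realize_equal, Term.realize_subst]
    rintro ⟨⟨h1, h2⟩, h3⟩
    congr 1
    funext i
    fin_cases i <;> simp_all
end

section
/- Define (m,p)-semitables inductively: z is the (m,0)-semitable, and if a(x,y,z) is an (m,p)-semitable then (Sᵖ(x) ⋅ S^{m·p}(y)) ⋅ a(x,y,z) is an (m,p+1)-semitable. Then for a semitable a(x,y,z): a(S(0), Sᵐ(0), (0⋅0)⋅k) = (Sᵖ(0) ⋅ Sᵠ(0)) ⋅ a(0,0,k) as terms if and only if q = m·p and a(x,y,z) is an (m,p)-semitable. -/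
open FirstOrder Language

/-- (m,p)-semitables: z is the (m,0)-semitable, and if a is an (m,p)-semitable then
(Sᵖ(x) ⋅ S^{m·p}(y)) ⋅ a is an (m,p+1)-semitable. -/
inductive IsMPSemitable (m : ℕ) : ℕ → L.Term (Fin 3) → Prop
  | base : IsMPSemitable m 0 (Term.var 2)
  | step (p : ℕ) (a : L.Term (Fin 3)) : IsMPSemitable m p a →
      IsMPSemitable m (p + 1)
        (pairT (pairT (Snum p (Term.var 0)) (Snum (m * p) (Term.var 1))) a)

set_option linter.unnecessarySeqFocus false in
lemma pair_subst {α β : Type} (t u : L.Term α) (σ : α → L.Term β) :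
    (pairT t u).subst σ = pairT (t.subst σ) (u.subst σ) := by
  simp only [pairT, Term.subst]
  congr 1
  funext i; fin_cases i <;> rfl

lemma Sf_subst {α β : Type} (t : L.Term α) (σ : α → L.Term β) :
    (Sf t).subst σ = Sf (t.subst σ) := by
  simp only [Sf, Term.subst]
  congr 1
  funext i; fin_cases i <;> rfl

lemma Snum_subst {α β : Type} (n : ℕ) (t : L.Term α) (σ : α → L.Term β) :
    (Snum n t).subst σ = Snum n (t.subst σ) := by
  induction n with
  | zero => rfl
  | succ k ih =>
    show (Sf (Snum k t)).subst σ = _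
    rw [Sf_subst, ih]; rfl

lemma pair_inj {α : Type} {t u t' u' : L.Term α} (h : pairT t u = pairT t' u') :
    t = t' ∧ u = u' := by
  simp only [pairT] at h
  injection h with h1 h2 h3
  exact ⟨congrFun h3 0, congrFun h3 1⟩

lemma Sf_inj {α : Type} {t t' : L.Term α} (h : Sf t = Sf t') : t = t' := by
  simp only [Sf] at h
  injection h with h1 h2 h3
  exact congrFun h3 0

lemma snum_add {α : Type} (a b : ℕ) (t : L.Term α) : Snum (a + b) t = Snum a (Snum b t) := by
  induction a with
  | zero => simp [Snum]
  | succ k ih => rw [Nat.succ_add]; simp [Snum, ih]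

lemma Sf_ne_kC {α : Type} (t : L.Term α) (n : ℕ) : Sf t ≠ kC n := by
  intro h; injection h; omega

lemma snum_k_inj {n n' : ℕ} (h : Snum n (kC 0) = Snum n' (kC 0 : CTerm)) : n = n' := by
  induction n generalizing n' with
  | zero =>
    cases n' with
    | zero => rfl
    | succ k => exact absurd h.symm (Sf_ne_kC _ _)
  | succ k ih =>
    cases n' with
    | zero => exact absurd h (Sf_ne_kC _ _)
    | succ j => rw [ih (Sf_inj h)]


lemma bwd (m p : ℕ) (a : L.Term (Fin 3)) (h : IsMPSemitable m p a) :
    a.subst (![Sf (kC 0), Snum m (kC 0), pairT (pairT (kC 0) (kC 0)) (kC 1)] : Fin 3 → CTerm) =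
      pairT (pairT (Snum p (kC 0)) (Snum (m * p) (kC 0)))
        (a.subst (![kC 0, kC 0, kC 1] : Fin 3 → CTerm)) := by
  induction h with
  | base => rfl
  | step p' b hb ih =>
    rw [pair_subst, pair_subst, pair_subst, pair_subst, Snum_subst, Snum_subst,
      Snum_subst, Snum_subst]
    show pairT (pairT (Snum p' (Sf (kC 0))) (Snum (m * p') (Snum m (kC 0)))) _ =
      pairT (pairT (Snum (p' + 1) (kC 0)) (Snum (m * (p' + 1)) (kC 0)))
        (pairT (pairT (Snum p' (kC 0)) (Snum (m * p') (kC 0))) _)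
    have e1 : ∀ n : ℕ, Snum n (Sf (kC 0 : CTerm)) = Snum (n + 1) (kC 0) := fun n => by
      rw [show Sf (kC 0 : CTerm) = Snum 1 (kC 0) from rfl, ← snum_add]
    have e2 : ∀ n : ℕ, Snum n (Snum m (kC 0 : CTerm)) = Snum (n + m) (kC 0) := fun n =>
      (snum_add n m _).symm
    rw [e1, e2, ih, Nat.mul_add, Nat.mul_one]

lemma fwd (m : ℕ) (a : L.Term (Fin 3)) (ha : IsSemitable a) : ∀ p q : ℕ,
    a.subst (![Sf (kC 0), Snum m (kC 0), pairT (pairT (kC 0) (kC 0)) (kC 1)] : Fin 3 → CTerm) =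
      pairT (pairT (Snum p (kC 0)) (Snum q (kC 0)))
        (a.subst (![kC 0, kC 0, kC 1] : Fin 3 → CTerm)) →
    q = m * p ∧ IsMPSemitable m p a := by
  induction ha with
  | base =>
    intro p q h
    simp only [Term.subst, Matrix.cons_val_two, Matrix.tail_cons, Matrix.head_cons] at h
    obtain ⟨h1, -⟩ := pair_inj h
    obtain ⟨h2, h3⟩ := pair_inj h1
    obtain rfl : 0 = p := snum_k_inj h2
    obtain rfl : 0 = q := snum_k_inj h3
    exact ⟨rfl, IsMPSemitable.base⟩
  | step p' q' b hb ih =>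
    intro p q h
    rw [pair_subst, pair_subst, pair_subst, pair_subst, Snum_subst, Snum_subst,
      Snum_subst, Snum_subst] at h
    simp only [Term.subst, Matrix.cons_val_zero, Matrix.cons_val_one, Matrix.head_cons] at h
    have e1 : ∀ n : ℕ, Snum n (Sf (kC 0 : CTerm)) = Snum (n + 1) (kC 0) := fun n => by
      rw [show Sf (kC 0 : CTerm) = Snum 1 (kC 0) from rfl, ← snum_add]
    have e2 : ∀ n : ℕ, Snum n (Snum m (kC 0 : CTerm)) = Snum (n + m) (kC 0) := fun n =>
      (snum_add n m _).symm
    rw [e1, e2] at h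
    have h' := h
    obtain ⟨h1, h2⟩ := pair_inj h'
    obtain ⟨h3, h4⟩ := pair_inj h1
    obtain rfl : p' + 1 = p := snum_k_inj h3
    obtain rfl : q' + m = q := snum_k_inj h4
    obtain ⟨hb2, hb3⟩ := ih p' q' h2
    subst hb2
    exact ⟨by ring, IsMPSemitable.step p' b hb3⟩

theorem stmt_11 (m p q : ℕ) (a : L.Term (Fin 3)) (ha : IsSemitable a) :
    a.subst (![Sf (kC 0), Snum m (kC 0), pairT (pairT (kC 0) (kC 0)) (kC 1)] : Fin 3 → CTerm) =
        pairT (pairT (Snum p (kC 0)) (Snum q (kC 0))) (a.subst (![kC 0, kC 0, kC 1] : Fin 3 → CTerm)) ↔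
      q = m * p ∧ IsMPSemitable m p a := by
  constructor
  · exact fwd m a ha p q
  · rintro ⟨rfl, hmp⟩
    exact bwd m p a hmp
end

section
/- For every quantifier-free formula φ in a first-order language with equality, φ is valid (true in all structures) if and only if φ is a quasitautology, i.e., a propositional tautological consequence of finitely many instances of the identity axioms (reflexivity for constants, symmetry, transitivity, and function/predicate congruence). -/
open FirstOrder Language

/-- A propositional valuation of the atomic formulas: truth values for identity
atoms between closed terms and for predicate atoms on closed terms. -/
structure AtomValuation where
  ve : L.Term (Empty ⊕ Fin 0) → L.Term (Empty ⊕ Fin 0) → Prop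
  vr : ∀ n, L.Relations n → (Fin n → L.Term (Empty ⊕ Fin 0)) → Prop

/-- The valuation satisfies all instances of the identity axioms: reflexivity for
constants, symmetry, transitivity, and function/predicate congruence. -/
def AtomValuation.IdOk (V : AtomValuation) : Prop :=
  (∀ k : L.Functions 0, V.ve (Term.func k ![]) (Term.func k ![])) ∧
  (∀ a b, V.ve a b → V.ve b a) ∧
  (∀ a b c, V.ve a b → V.ve b c → V.ve a c) ∧
  (∀ (n : ℕ) (f : L.Functions n) (as bs : Fin n → L.Term (Empty ⊕ Fin 0)),
    (∀ i, V.ve (as i) (bs i)) → V.ve (Term.func f as) (Term.func f bs)) ∧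
  (∀ (n : ℕ) (R : L.Relations n) (as bs : Fin n → L.Term (Empty ⊕ Fin 0)),
    (∀ i, V.ve (as i) (bs i)) → V.vr n R as → V.vr n R bs)

/-- Propositional evaluation of a quantifier-free formula under a valuation of
its atoms (the value on quantified formulas is irrelevant). -/
def AtomValuation.Eval (V : AtomValuation) : L.BoundedFormula Empty 0 → Prop
  | .falsum => False
  | .equal t₁ t₂ => V.ve t₁ t₂
  | .rel R ts => V.vr _ R ts
  | .imp φ ψ => V.Eval φ → V.Eval ψ
  | .all _ => True

/-- φ is a quasitautology: it holds under every propositional valuation of its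
atoms that satisfies the identity axioms. -/
def Quasitautology (φ : L.Formula Empty) : Prop :=
  ∀ V : AtomValuation, V.IdOk → V.Eval φ

namespace S17

abbrev CT := L.Term (Empty ⊕ Fin 0)

def ev {M : Type} : Empty ⊕ Fin 0 → M := fun x => Sum.elim Empty.elim (fun i => i.elim0) x

lemma funext_empty {M : Type} (f g : Empty ⊕ Fin 0 → M) : f = g := by
  funext x
  cases x with
  | inl e => exact e.elim
  | inr i => exact i.elim0

def sv (M : Type) [L.Structure M] : AtomValuation where
  ve a b := a.realize (ev : _ → M) = b.realize ev
  vr _ R ts := Structure.RelMap R (fun i => (ts i).realize (ev : _ → M))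

lemma sv_idok (M : Type) [L.Structure M] : (sv M).IdOk := by
  refine ⟨fun k => rfl, fun a b h => h.symm, fun a b c h1 h2 => h1.trans h2, ?_, ?_⟩
  · intro n f as bs h
    simp only [sv, Term.realize_func]
    congr 1
    funext i
    exact h i
  · intro n R as bs h hr
    simp only [sv] at *
    have : (fun i => (as i).realize (ev : _ → M)) = fun i => (bs i).realize ev :=
      funext h
    rwa [this] at hr

lemma sv_eval {M : Type} [L.Structure M] {φ : L.BoundedFormula Empty 0} (h : φ.IsQF)
    (v : Empty → M) (xs : Fin 0 → M) :
    (sv M).Eval φ ↔ φ.Realize v xs := by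
  induction h with
  | falsum => simp [AtomValuation.Eval, BoundedFormula.Realize]
  | of_isAtomic ha =>
    cases ha with
    | equal t₁ t₂ =>
      simp only [BoundedFormula.realize_bdEqual]
      simp only [Term.bdEqual, AtomValuation.Eval, sv]
      rw [funext_empty ev (Sum.elim v xs)]
    | rel R ts =>
      simp only [BoundedFormula.realize_rel]
      simp only [Relations.boundedFormula, AtomValuation.Eval, sv]
      rw [funext_empty ev (Sum.elim v xs)]
  | imp _ _ ih1 ih2 =>
    simp only [AtomValuation.Eval, BoundedFormula.realize_imp]
    exact imp_congr ih1 ih2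

lemma ve_refl (V : AtomValuation) (hV : V.IdOk) : ∀ t : CT, V.ve t t := by
  intro t
  induction t with
  | var x =>
    cases x with
    | inl e => exact e.elim
    | inr i => exact i.elim0
  | func f ts ih => exact hV.2.2.2.1 _ f ts ts ih

def tsetoid (V : AtomValuation) (hV : V.IdOk) : Setoid CT :=
  ⟨V.ve, ⟨ve_refl V hV, fun h => hV.2.1 _ _ h, fun h1 h2 => hV.2.2.1 _ _ _ h1 h2⟩⟩

def QM (V : AtomValuation) (hV : V.IdOk) : Type := Quotient (tsetoid V hV)

instance (V : AtomValuation) (hV : V.IdOk) : Nonempty (QM V hV) :=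
  ⟨Quotient.mk _ (Term.func ((0 : ℕ) : L.Functions 0) ![])⟩

noncomputable instance (V : AtomValuation) (hV : V.IdOk) : L.Structure (QM V hV) where
  funMap := fun f xs => Quotient.mk _ (Term.func f (fun i => (xs i).out))
  RelMap := fun R xs => V.vr _ R (fun i => (xs i).out)

lemma realize_eq (V : AtomValuation) (hV : V.IdOk) (t : CT) :
    (t.realize (ev : _ → QM V hV)) = Quotient.mk _ t := by
  induction t with
  | var x =>
    cases x with
    | inl e => exact e.elim
    | inr i => exact i.elim0
  | func f ts ih =>
    rw [Term.realize_func]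
    show Quotient.mk _ (Term.func f fun i => ((ts i).realize (ev : _ → QM V hV)).out) = _
    apply Quotient.sound
    apply hV.2.2.2.1
    intro i
    rw [ih i]
    exact Quotient.mk_out (s := tsetoid V hV) (ts i)

lemma qm_eval (V : AtomValuation) (hV : V.IdOk) {φ : L.BoundedFormula Empty 0} (h : φ.IsQF)
    (v : Empty → QM V hV) (xs : Fin 0 → QM V hV) :
    V.Eval φ ↔ φ.Realize v xs := by
  induction h with
  | falsum => simp [AtomValuation.Eval, BoundedFormula.Realize]
  | of_isAtomic ha =>
    cases ha with
    | equal t₁ t₂ =>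
      simp only [BoundedFormula.realize_bdEqual]
      simp only [Term.bdEqual, AtomValuation.Eval]
      rw [← funext_empty ev (Sum.elim v xs), realize_eq V hV, realize_eq V hV]
      exact ⟨fun h => Quotient.sound (s := tsetoid V hV) h,
        fun h => Quotient.exact (s := tsetoid V hV) h⟩
    | rel R ts =>
      simp only [BoundedFormula.realize_rel]
      simp only [Relations.boundedFormula, AtomValuation.Eval]
      rw [← funext_empty ev (Sum.elim v xs)]
      have hre : ∀ i, ((ts i).realize (ev : _ → QM V hV)) = Quotient.mk _ (ts i) :=
        fun i => realize_eq V hV (ts i)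
      show _ ↔ V.vr _ R (fun i => ((ts i).realize (ev : _ → QM V hV)).out)
      constructor
      · intro hr
        refine hV.2.2.2.2 _ R ts _ ?_ hr
        intro i
        refine (tsetoid V hV).symm ?_
        rw [hre i]
        exact Quotient.mk_out (s := tsetoid V hV) (ts i)
      · intro hr
        refine hV.2.2.2.2 _ R _ ts ?_ hr
        intro i
        rw [hre i]
        exact Quotient.mk_out (s := tsetoid V hV) (ts i)
  | imp _ _ ih1 ih2 =>
    simp only [AtomValuation.Eval, BoundedFormula.realize_imp]
    exact imp_congr ih1 ih2

end S17

theorem stmt_17 (φ : L.Formula Empty) (hqf : φ.IsQF) :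
    Valid φ ↔ Quasitautology φ := by
  constructor
  · intro hv V hVok
    have := hv (S17.QM V hVok)
    exact (S17.qm_eval V hVok hqf _ _).mpr this
  · intro hq M _ _
    exact (S17.sv_eval hqf _ _).mp (hq (S17.sv M) (S17.sv_idok M))
end
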